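/- There exists a finite T₀ topological space X with exactly six points that is equidimensional, equicodimensional, and catenary, but in which there exist maximal chains of irreducible closed subsets of lengths 1 and 2; hence weak biequidimensionality does not imply biequidimensionality. -/

import Mathlib

open Order TopologicalSpace

/-- A maximal chain of irreducible closed subsets. -/
def IsMaximalChain {α : Type*} [PartialOrder α] (p : LTSeries α) : Prop :=
  IsMin p.head ∧ IsMax p.last ∧ ∀ i : Fin p.length, p.toFun i.castSucc ⋖ p.toFun i.succ

/-- `X` is equidimensional: all irreducible components have the same dimension. -/
def EquidimensionalSpace (X : Type*) [TopologicalSpace X] : Prop :=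
  ∀ Z Z' : IrreducibleCloseds X, IsMax Z → IsMax Z' →
    Order.krullDim (Set.Iic Z) = Order.krullDim (Set.Iic Z')

/-- `X` is equicodimensional: all minimal irreducible closed subsets have the same
codimension in `X`. -/
def EquicodimensionalSpace (X : Type*) [TopologicalSpace X] : Prop :=
  ∀ Y Y' : IrreducibleCloseds X, IsMin Y → IsMin Y' →
    Order.krullDim (Set.Ici Y) = Order.krullDim (Set.Ici Y')

/-- `X` is catenary: any two saturated chains of irreducible closed subsets with the same
endpoints have the same length. -/
def CatenarySpace (X : Type*) [TopologicalSpace X] : Prop :=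
  ∀ p q : RelSeries {x : IrreducibleCloseds X × IrreducibleCloseds X | x.1 ⋖ x.2},
    p.head = q.head → p.last = q.last → p.length = q.length

/-- `X` has a maximal chain of irreducible closed subsets of length `n`. -/
def HasMaxChainOfLength (X : Type*) [TopologicalSpace X] (n : ℕ) : Prop :=
  ∃ p : LTSeries (IrreducibleCloseds X), IsMaximalChain p ∧ p.length = n

/-! ### Auxiliary material -/

/-- Every finite topological space is quasi-sober. -/
theorem quasiSober_of_finite (α : Type*) [TopologicalSpace α] [Finite α] : QuasiSober α := by
  constructor
  intro S hS hSc
  have hfin : (Set.image (fun x => closure ({x} : Set α)) S).Finite := S.toFinite.image _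
  obtain ⟨z, hz, hSz⟩ := (isIrreducible_iff_sUnion_isClosed.mp hS) hfin.toFinset
    (by
      intro z hz
      rw [Set.Finite.mem_toFinset] at hz
      obtain ⟨x, -, rfl⟩ := hz
      exact isClosed_closure)
    (by
      intro x hx
      exact ⟨closure {x}, (Set.Finite.mem_toFinset hfin).mpr ⟨x, hx, rfl⟩,
        subset_closure rfl⟩)
  rw [Set.Finite.mem_toFinset] at hz
  obtain ⟨x, hxS, rfl⟩ := hz
  exact ⟨x, Set.Subset.antisymm (closure_minimal (Set.singleton_subset_iff.2 hxS) hSc) hSz⟩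

/-- The six-point poset of the counterexample. -/
inductive P : Type
  | x1 | x2 | x3 | x4 | x5 | x6
  deriving DecidableEq

instance : Fintype P := ⟨{P.x1, P.x2, P.x3, P.x4, P.x5, P.x6}, fun x => by cases x <;> simp⟩

namespace P

def leB : P → P → Bool
  | x1, x1 => true | x1, x3 => true | x1, x5 => true | x1, x6 => true
  | x2, x2 => true | x2, x4 => true | x2, x5 => true | x2, x6 => true
  | x3, x3 => true | x3, x5 => true
  | x4, x4 => true | x4, x6 => true
  | x5, x5 => true | x6, x6 => true
  | _, _ => false

instance : PartialOrder P where
  le a b := leB a b = true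
  le_refl := (by decide : ∀ a : P, leB a a = true)
  le_trans := (by decide : ∀ a b c : P, leB a b = true → leB b c = true → leB a c = true)
  le_antisymm := (by decide : ∀ a b : P, leB a b = true → leB b a = true → a = b)

instance : DecidableRel ((· ≤ ·) : P → P → Prop) := fun _ _ =>
  inferInstanceAs (Decidable (_ = true))

instance : DecidableRel ((· < ·) : P → P → Prop) := fun _ _ =>
  inferInstanceAs (Decidable (_ ∧ _))

instance : DecidablePred (IsMax : P → Prop) := fun a =>
  decidable_of_iff (∀ b, a ≤ b → b ≤ a) Iff.rfl

instance : DecidablePred (IsMin : P → Prop) := fun a =>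
  decidable_of_iff (∀ b, b ≤ a → a ≤ b) Iff.rfl

instance : DecidableRel ((· ⋖ ·) : P → P → Prop) := fun a b =>
  decidable_of_iff (a < b ∧ ∀ c, a < c → ¬ c < b) Iff.rfl

/-- The order automorphism of `P` swapping the two "columns". -/
def σfun : P → P
  | x1 => x2 | x2 => x1 | x3 => x4 | x4 => x3 | x5 => x6 | x6 => x5

lemma σmono : ∀ a b : P, σfun a ≤ σfun b ↔ a ≤ b := by decide

def σ : P ≃o P where
  toFun := σfun
  invFun := σfun
  left_inv := by decide
  right_inv := by decide
  map_rel_iff' {a b} := σmono a b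

instance : TopologicalSpace P := Topology.upperSet P

instance : Topology.IsUpperSet P := ⟨rfl⟩

instance : T0Space P := by
  refine (t0Space_iff_inseparable P).mpr fun x y h => ?_
  have h2 := inseparable_iff_closure_eq.mp h
  rw [Topology.IsUpperSet.closure_singleton, Topology.IsUpperSet.closure_singleton] at h2
  exact Set.Iic_injective h2

instance : QuasiSober P := quasiSober_of_finite P

lemma iic_genericPoint (Z : IrreducibleCloseds P) :
    Set.Iic Z.2.genericPoint = (Z : Set P) := by
  have h1 : IsGenericPoint Z.2.genericPoint (Z : Set P) :=
    Z.2.isGenericPoint_genericPoint Z.3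
  rw [← h1.def, Topology.IsUpperSet.closure_singleton]

/-- Irreducible closed subsets of `P` correspond to points of `P`, as an order isomorphism. -/
noncomputable def e : IrreducibleCloseds P ≃o P where
  toEquiv := irreducibleSetEquivPoints.toEquiv
  map_rel_iff' {Z Z'} := by
    show Z.2.genericPoint ≤ Z'.2.genericPoint ↔ Z ≤ Z'
    rw [← Set.Iic_subset_Iic, iic_genericPoint, iic_genericPoint]
    exact Iff.rfl

/-- `Iic` transported along an order isomorphism of preorders. -/
def iicIso {α β : Type*} [Preorder α] [Preorder β] (f : α ≃o β) (a : α) :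
    Set.Iic a ≃o Set.Iic (f a) where
  toFun x := ⟨f x, f.le_iff_le.mpr x.2⟩
  invFun y := ⟨f.symm y, f.symm_apply_le.mpr y.2⟩
  left_inv x := Subtype.ext (f.symm_apply_apply x)
  right_inv y := Subtype.ext (f.apply_symm_apply y)
  map_rel_iff' {x y} := by exact f.le_iff_le (x := x.1) (y := y.1)

/-- `Ici` transported along an order isomorphism of preorders. -/
def iciIso {α β : Type*} [Preorder α] [Preorder β] (f : α ≃o β) (a : α) :
    Set.Ici a ≃o Set.Ici (f a) where
  toFun x := ⟨f x, f.le_iff_le.mpr x.2⟩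
  invFun y := ⟨f.symm y, f.le_symm_apply.mpr y.2⟩
  left_inv x := Subtype.ext (f.symm_apply_apply x)
  right_inv y := Subtype.ext (f.apply_symm_apply y)
  map_rel_iff' {x y} := by exact f.le_iff_le (x := x.1) (y := y.1)

abbrev CovS := RelSeries {x : P × P | x.1 ⋖ x.2}

def covltHom : ((· ⋖ ·) : P → P → Prop) →r ((· < ·) : P → P → Prop) :=
  ⟨id, fun h => h.lt⟩

lemma cov_strictMono (r : CovS) : StrictMono r.toFun :=
  LTSeries.strictMono (r.map covltHom)

lemma lt_len_le (r : LTSeries P) : r.length ≤ 2 := by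
  by_contra hc
  push_neg at hc
  have hm := r.strictMono
  have no3 : ∀ a b c d : P, a < b → b < c → c < d → False := by decide
  exact no3 _ _ _ _
    (hm (show (⟨0, by omega⟩ : Fin (r.length+1)) < ⟨1, by omega⟩ from by
      simp [Fin.lt_def]))
    (hm (show (⟨1, by omega⟩ : Fin (r.length+1)) < ⟨2, by omega⟩ from by
      simp [Fin.lt_def]))
    (hm (show (⟨2, by omega⟩ : Fin (r.length+1)) < ⟨3, by omega⟩ from by
      simp [Fin.lt_def]))

lemma cov_len_le (r : CovS) : r.length ≤ 2 := lt_len_le (r.map covltHom)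

lemma Pcat_aux (p q : CovS) (hh : p.head = q.head) (hl : p.last = q.last)
    (hlt : p.length < q.length) : False := by
  have hq2 := cov_len_le q
  have hm := cov_strictMono q
  rcases Nat.lt_or_ge p.length 1 with h | h
  · have hple : p.head = p.last := congrArg p.toFun (Fin.ext (by simp; omega))
    have hql : q.head < q.last := by
      have hx := hm (show (⟨0, by omega⟩ : Fin (q.length+1)) < ⟨q.length, by omega⟩ from by
        simp [Fin.lt_def]; omega)
      have e1 : q.head = q.toFun ⟨0, by omega⟩ := congrArg q.toFun (Fin.ext (by simp))
      have e2 : q.last = q.toFun ⟨q.length, by omega⟩ := congrArg q.toFun (Fin.ext (by simp))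
      rw [e1, e2]; exact hx
    rw [← hh, ← hl, ← hple] at hql
    exact lt_irrefl _ hql
  · have hp1 : p.length = 1 := by omega
    have hq2' : q.length = 2 := by omega
    have hcov : p.head ⋖ p.last := by
      have hs := p.step ⟨0, by omega⟩
      have e1 : p.head = p.toFun (Fin.castSucc ⟨0, by omega⟩) :=
        congrArg p.toFun (Fin.ext (by simp))
      have e2 : p.last = p.toFun (Fin.succ ⟨0, by omega⟩) :=
        congrArg p.toFun (Fin.ext (by simp [hp1]))
      rw [e1, e2]; exact hs
    have h1 : q.head < q.toFun ⟨1, by omega⟩ := by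
      have hx := hm (show (⟨0, by omega⟩ : Fin (q.length+1)) < ⟨1, by omega⟩ from by
        simp [Fin.lt_def])
      have e1 : q.head = q.toFun ⟨0, by omega⟩ := congrArg q.toFun (Fin.ext (by simp))
      rw [e1]; exact hx
    have h2 : q.toFun ⟨1, by omega⟩ < q.last := by
      have hx := hm (show (⟨1, by omega⟩ : Fin (q.length+1)) < ⟨q.length, by omega⟩ from by
        simp [Fin.lt_def]; omega)
      have e2 : q.last = q.toFun ⟨q.length, by omega⟩ := congrArg q.toFun (Fin.ext (by simp))
      rw [e2]; exact hx
    rw [hh, hl] at hcov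
    exact hcov.2 h1 h2

lemma Pcatenary (p q : CovS) (hh : p.head = q.head) (hl : p.last = q.last) :
    p.length = q.length := by
  rcases lt_trichotomy p.length q.length with h | h | h
  · exact (Pcat_aux p q hh hl h).elim
  · exact h
  · exact (Pcat_aux q p hh.symm hl.symm h).elim

def c1 : LTSeries P := ⟨1, ![x1, x6], by decide⟩

def c2 : LTSeries P := ⟨2, ![x1, x3, x5], by decide⟩

noncomputable def eCovHom :
    ((· ⋖ ·) : IrreducibleCloseds P → IrreducibleCloseds P → Prop) →r
      ((· ⋖ ·) : P → P → Prop) :=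
  ⟨P.e, fun h => (apply_covBy_apply_iff P.e).mpr h⟩

end P

/-! ### The main theorem -/

/-- There exists a finite `T₀` topological space with exactly six points that is
equidimensional, equicodimensional and catenary, but which has maximal chains of irreducible
closed subsets of length `1` and of length `2`; hence weak biequidimensionality does not imply
biequidimensionality. -/
theorem stmt_12 :
    ∃ (X : Type) (t : TopologicalSpace X), @T0Space X t ∧ Nat.card X = 6 ∧
      @EquidimensionalSpace X t ∧ @EquicodimensionalSpace X t ∧ @CatenarySpace X t ∧
      @HasMaxChainOfLength X t 1 ∧ @HasMaxChainOfLength X t 2 := by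
  refine ⟨P, inferInstance, inferInstance, by rw [Nat.card_eq_fintype_card]; rfl, ?_, ?_, ?_, ?_, ?_⟩
  · -- Equidimensional
    have hmax : ∀ z : P, IsMax z → z = P.x5 ∨ z = P.x6 := by decide
    have hstep : Order.krullDim (Set.Iic P.x5) = Order.krullDim (Set.Iic P.x6) :=
      Order.krullDim_eq_of_orderIso (P.iicIso P.σ P.x5)
    have keyP : ∀ z z' : P, IsMax z → IsMax z' →
        Order.krullDim (Set.Iic z) = Order.krullDim (Set.Iic z') := by
      intro z z' hz hz'
      rcases hmax z hz with rfl | rfl <;> rcases hmax z' hz' with rfl | rfl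
      exacts [rfl, hstep, hstep.symm, rfl]
    intro Z Z' hZ hZ'
    calc Order.krullDim (Set.Iic Z) = Order.krullDim (Set.Iic (P.e Z)) :=
          Order.krullDim_eq_of_orderIso (P.iicIso P.e Z)
      _ = Order.krullDim (Set.Iic (P.e Z')) :=
          keyP _ _ (P.e.isMax_apply.mpr hZ) (P.e.isMax_apply.mpr hZ')
      _ = Order.krullDim (Set.Iic Z') := (Order.krullDim_eq_of_orderIso (P.iicIso P.e Z')).symm
  · -- Equicodimensional
    have hmin : ∀ z : P, IsMin z → z = P.x1 ∨ z = P.x2 := by decide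
    have hstep : Order.krullDim (Set.Ici P.x1) = Order.krullDim (Set.Ici P.x2) :=
      Order.krullDim_eq_of_orderIso (P.iciIso P.σ P.x1)
    have keyP : ∀ z z' : P, IsMin z → IsMin z' →
        Order.krullDim (Set.Ici z) = Order.krullDim (Set.Ici z') := by
      intro z z' hz hz'
      rcases hmin z hz with rfl | rfl <;> rcases hmin z' hz' with rfl | rfl
      exacts [rfl, hstep, hstep.symm, rfl]
    intro Y Y' hY hY'
    calc Order.krullDim (Set.Ici Y) = Order.krullDim (Set.Ici (P.e Y)) :=
          Order.krullDim_eq_of_orderIso (P.iciIso P.e Y)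
      _ = Order.krullDim (Set.Ici (P.e Y')) :=
          keyP _ _ (P.e.isMin_apply.mpr hY) (P.e.isMin_apply.mpr hY')
      _ = Order.krullDim (Set.Ici Y') := (Order.krullDim_eq_of_orderIso (P.iciIso P.e Y')).symm
  · -- Catenary
    intro p q hh hl
    exact P.Pcatenary (p.map P.eCovHom) (q.map P.eCovHom)
      (by rw [RelSeries.head_map, RelSeries.head_map, hh])
      (by rw [RelSeries.last_map, RelSeries.last_map, hl])
  · -- Max chain of length 1
    refine ⟨P.c1.map P.e.symm P.e.symm.strictMono, ⟨?_, ?_, ?_⟩, rfl⟩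
    · rw [LTSeries.head_map]
      exact P.e.symm.isMin_apply.mpr (by decide)
    · rw [LTSeries.last_map]
      exact P.e.symm.isMax_apply.mpr (by decide)
    · intro i
      have hstep : ∀ j : Fin P.c1.length, P.c1.toFun j.castSucc ⋖ P.c1.toFun j.succ := by decide
      exact (apply_covBy_apply_iff P.e.symm).mpr (hstep i)
  · -- Max chain of length 2
    refine ⟨P.c2.map P.e.symm P.e.symm.strictMono, ⟨?_, ?_, ?_⟩, rfl⟩
    · rw [LTSeries.head_map]
      exact P.e.symm.isMin_apply.mpr (by decide)
    · rw [LTSeries.last_map]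
      exact P.e.symm.isMax_apply.mpr (by decide)
    · intro i
      have hstep : ∀ j : Fin P.c2.length, P.c2.toFun j.castSucc ⋖ P.c2.toFun j.succ := by decide
      exact (apply_covBy_apply_iff P.e.symm).mpr (hstep i)
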